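/- Let n ≥ 1, 0 ≤ α < π/2, let A, B ∈ Mₙ(ℂ) satisfy A, B ∈ S_α, and let t ∈ (0,1). Then cos(α)·w(AB)^{1/2} ≤ H_t(w(A), w(B)), where H_t(w(A), w(B)) := (w(A)^{1−t}w(B)^t + w(A)^t w(B)^{1−t})/2. -/

import Mathlib

open Matrix MeasureTheory
open scoped ComplexOrder

attribute [local instance] Matrix.normedAddCommGroup Matrix.normedSpace

/-- The numerical radius of a complex `n × n` matrix. -/
noncomputable def nradius {n : ℕ} (A : Matrix (Fin n) (Fin n) ℂ) : ℝ :=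
  sSup {r : ℝ | ∃ x : EuclideanSpace ℂ (Fin n), ‖x‖ = 1 ∧
    r = ‖(inner ℂ x (Matrix.toEuclideanCLM (𝕜 := ℂ) A x) : ℂ)‖}

/-- The operator (spectral) norm of a complex `n × n` matrix. -/
noncomputable def opNorm {n : ℕ} (A : Matrix (Fin n) (Fin n) ℂ) : ℝ :=
  ‖(Matrix.toEuclideanCLM (𝕜 := ℂ) A :
      EuclideanSpace ℂ (Fin n) →L[ℂ] EuclideanSpace ℂ (Fin n))‖

/-- The real part `(A + Aᴴ)/2` of a matrix. -/
noncomputable def matRe {n : ℕ} (A : Matrix (Fin n) (Fin n) ℂ) : Matrix (Fin n) (Fin n) ℂ :=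
  (1 / 2 : ℂ) • (A + Aᴴ)

/-- `A ∈ S_α` : `Re A` is positive definite and the numerical range of `A` lies in the
sector `{z : |Im z| ≤ tan α · Re z}`. -/
def InSector {n : ℕ} (α : ℝ) (A : Matrix (Fin n) (Fin n) ℂ) : Prop :=
  (matRe A).PosDef ∧ ∀ x : EuclideanSpace ℂ (Fin n), ‖x‖ = 1 →
    |(inner ℂ x (Matrix.toEuclideanCLM (𝕜 := ℂ) A x) : ℂ).im| ≤
      Real.tan α * ((inner ℂ x (Matrix.toEuclideanCLM (𝕜 := ℂ) A x) : ℂ)).re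

/-- The Beta-type probability measure on `(0,1)` with density
`(sin (t π) / π) · s^(t-1) · (1-s)^(-t)` with respect to Lebesgue measure. -/
noncomputable def betaMeasure (t : ℝ) : Measure ℝ :=
  (volume.restrict (Set.Ioo (0 : ℝ) 1)).withDensity fun s =>
    ENNReal.ofReal (Real.sin (t * Real.pi) / Real.pi * s ^ (t - 1) * (1 - s) ^ (-t))

/-- The weighted geometric mean `A ♯_t B = ∫₀¹ ((1-s)A⁻¹ + sB⁻¹)⁻¹ dμ_t(s)`. -/
noncomputable def geomMean {n : ℕ} (A B : Matrix (Fin n) (Fin n) ℂ) (t : ℝ) :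
    Matrix (Fin n) (Fin n) ℂ :=
  ∫ s, ((1 - s) • A⁻¹ + s • B⁻¹)⁻¹ ∂(betaMeasure t)

/-- The Heinz mean `H_t(A,B) = (A ♯_t B + A ♯_{1-t} B)/2` of matrices. -/
noncomputable def heinzMat {n : ℕ} (A B : Matrix (Fin n) (Fin n) ℂ) (t : ℝ) :
    Matrix (Fin n) (Fin n) ℂ :=
  (1 / 2 : ℂ) • (geomMean A B t + geomMean A B (1 - t))

/-- The Heinz mean `H_t(a,b) = (a^{1-t}b^t + a^t b^{1-t})/2` of positive reals. -/
noncomputable def heinzScal (a b t : ℝ) : ℝ :=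
  (a ^ (1 - t) * b ^ t + a ^ t * b ^ (1 - t)) / 2

section Aux
open ContinuousLinearMap
set_option linter.unusedSectionVars false

variable {E : Type*} [NormedAddCommGroup E] [InnerProductSpace ℂ E] [CompleteSpace E]

lemma real_smul_coe (r : ℝ) (x : E) : r • x = (r : ℂ) • x :=
  RCLike.real_smul_eq_coe_smul (K := ℂ) r x

lemma inner_real_smul_map (T : E →L[ℂ] E) (x : E) (r : ℝ) :
    (inner ℂ (r • x) (T (r • x)) : ℂ) = (r ^ 2 : ℝ) • (inner ℂ x (T x) : ℂ) := by
  rw [real_smul_coe, _root_.map_smul, inner_smul_left, inner_smul_right, Complex.real_smul]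
  push_cast
  simp [Complex.conj_ofReal]
  ring

lemma inner_selfadj_symm {T : E →L[ℂ] E} (hT : IsSelfAdjoint T) (u v : E) :
    (inner ℂ (T u) v : ℂ) = inner ℂ u (T v) := by
  have := adjoint_inner_left T v u
  rwa [hT.adjoint_eq] at this

lemma selfadj_norm_le {T : E →L[ℂ] E} (hT : IsSelfAdjoint T) {c : ℝ} (hc : 0 ≤ c)
    (h : ∀ x : E, |(inner ℂ x (T x) : ℂ).re| ≤ c * ‖x‖ ^ 2) : ‖T‖ ≤ c := by
  have hadj := inner_selfadj_symm hT
  refine T.opNorm_le_bound hc fun x => ?_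
  by_cases hTx : T x = 0
  · simp [hTx]
    positivity
  have hx : x ≠ 0 := by
    rintro rfl; simp at hTx
  have hxn : (0:ℝ) < ‖x‖ := norm_pos_iff.mpr hx
  have hTxn : (0:ℝ) < ‖T x‖ := norm_pos_iff.mpr hTx
  set y : E := (‖x‖ / ‖T x‖) • T x with hy
  have hyn : ‖y‖ = ‖x‖ := by
    rw [hy, norm_smul]
    simp [abs_of_pos (div_pos hxn hTxn), div_mul_cancel₀, hTxn.ne']
  have key : (inner ℂ (x + y) (T (x + y)) : ℂ) - inner ℂ (x - y) (T (x - y)) =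
      2 * (inner ℂ x (T y) + (inner ℂ y (T x) : ℂ)) := by
    simp only [map_add, map_sub, inner_add_left,
      inner_add_right, inner_sub_left, inner_sub_right]
    ring
  have hre : ((inner ℂ x (T y) : ℂ)).re = ((inner ℂ y (T x) : ℂ)).re := by
    have h2 : (inner ℂ (T x) y : ℂ) = starRingEnd ℂ (inner ℂ y (T x)) := (inner_conj_symm _ _).symm
    rw [← hadj x y, h2, Complex.conj_re]
  have hyTx : ((inner ℂ y (T x) : ℂ)).re = ‖x‖ * ‖T x‖ := by
    have h3 : (inner ℂ y (T x) : ℂ) = ((‖x‖ / ‖T x‖ : ℝ) : ℂ) * inner ℂ (T x) (T x) := by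
      rw [hy, real_smul_coe, inner_smul_left]
      simp [Complex.conj_ofReal]
    rw [h3, inner_self_eq_norm_sq_to_K, Complex.mul_re]
    norm_num
    norm_cast
    field_simp
  have keyre : ((inner ℂ (x + y) (T (x + y)) : ℂ)).re - ((inner ℂ (x - y) (T (x - y)) : ℂ)).re
      = 4 * (‖x‖ * ‖T x‖) := by
    have h4 := congrArg Complex.re key
    simp only [Complex.sub_re, Complex.add_re, Complex.mul_re, Complex.re_ofNat,
      Complex.im_ofNat, zero_mul, sub_zero] at h4
    rw [h4, hre, hyTx]; ring
  have hpar : ‖x + y‖ ^ 2 + ‖x - y‖ ^ 2 = 2 * (‖x‖ ^ 2 + ‖y‖ ^ 2) := by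
    have := parallelogram_law_with_norm ℂ x y
    nlinarith [this]
  have hles : 4 * (‖x‖ * ‖T x‖) ≤ c * (2 * (‖x‖ ^ 2 + ‖y‖ ^ 2)) := by
    have h1 := (abs_le.mp (h (x + y))).2
    have h2 := (abs_le.mp (h (x - y))).1
    nlinarith [hpar]
  rw [hyn] at hles
  nlinarith

lemma inner_selfadj_real {T : E →L[ℂ] E} (hT : IsSelfAdjoint T) (x : E) :
    ((inner ℂ x (T x) : ℂ)).im = 0 := by
  have h1 : (inner ℂ (T x) x : ℂ) = inner ℂ x (T x) := inner_selfadj_symm hT x x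
  have h2 : starRingEnd ℂ (inner ℂ x (T x) : ℂ) = inner ℂ x (T x) := by
    rw [← inner_conj_symm] at h1 ⊢
    simp_all
  exact Complex.conj_eq_iff_im.mp h2

lemma norm_one_add_I_smul {K : E →L[ℂ] E} (hK : IsSelfAdjoint K) {b : ℝ} (hb : 0 ≤ b)
    (hKb : ‖K‖ ≤ b) : ‖(1 : E →L[ℂ] E) + Complex.I • K‖ ≤ Real.sqrt (1 + b ^ 2) := by
  refine opNorm_le_bound _ (Real.sqrt_nonneg _) fun x => ?_
  have happ : ((1 : E →L[ℂ] E) + Complex.I • K) x = x + Complex.I • (K x) := by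
    simp
  have hsq : ‖((1 : E →L[ℂ] E) + Complex.I • K) x‖ ^ 2 = ‖x‖ ^ 2 + ‖K x‖ ^ 2 := by
    rw [happ, norm_add_sq (𝕜 := ℂ)]
    have h5 : (inner ℂ x (Complex.I • K x) : ℂ) = Complex.I * inner ℂ x (K x) := inner_smul_right _ _ _
    rw [h5]
    have him := inner_selfadj_real hK x
    simp [Complex.mul_re, him, norm_smul]
  have hKx : ‖K x‖ ≤ b * ‖x‖ := le_trans (K.le_opNorm x) (by
    have := norm_nonneg x; nlinarith)
  have h2 : ‖((1 : E →L[ℂ] E) + Complex.I • K) x‖ ^ 2 ≤ (Real.sqrt (1 + b ^ 2) * ‖x‖) ^ 2 := by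
    rw [hsq, mul_pow, Real.sq_sqrt (by positivity)]
    have := norm_nonneg (K x); have := norm_nonneg x
    nlinarith
  have h3 := Real.sqrt_le_sqrt h2
  rwa [Real.sqrt_sq (norm_nonneg _), Real.sqrt_sq (by positivity)] at h3

end Aux

section NR

variable {n : ℕ}

lemma nradius_bddAbove (A : Matrix (Fin n) (Fin n) ℂ) :
    BddAbove {r : ℝ | ∃ x : EuclideanSpace ℂ (Fin n), ‖x‖ = 1 ∧
      r = ‖(inner ℂ x (Matrix.toEuclideanCLM (𝕜 := ℂ) A x) : ℂ)‖} := by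
  refine ⟨‖Matrix.toEuclideanCLM (𝕜 := ℂ) A‖, ?_⟩
  rintro r ⟨x, hx, rfl⟩
  calc ‖(inner ℂ x (Matrix.toEuclideanCLM (𝕜 := ℂ) A x) : ℂ)‖
      ≤ ‖x‖ * ‖Matrix.toEuclideanCLM (𝕜 := ℂ) A x‖ := norm_inner_le_norm _ _
    _ ≤ ‖x‖ * (‖Matrix.toEuclideanCLM (𝕜 := ℂ) A‖ * ‖x‖) := by
        gcongr
        exact ContinuousLinearMap.le_opNorm _ _
    _ = ‖Matrix.toEuclideanCLM (𝕜 := ℂ) A‖ := by rw [hx]; ring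

lemma le_nradius (A : Matrix (Fin n) (Fin n) ℂ) {x : EuclideanSpace ℂ (Fin n)}
    (hx : ‖x‖ = 1) : ‖(inner ℂ x (Matrix.toEuclideanCLM (𝕜 := ℂ) A x) : ℂ)‖ ≤ nradius A :=
  le_csSup (nradius_bddAbove A) ⟨x, hx, rfl⟩

lemma exists_unit (hn : 1 ≤ n) : ∃ x : EuclideanSpace ℂ (Fin n), ‖x‖ = 1 :=
  ⟨EuclideanSpace.single (⟨0, hn⟩ : Fin n) (1 : ℂ), by
    rw [EuclideanSpace.norm_single]; simp⟩

lemma nradius_nonneg (hn : 1 ≤ n) (A : Matrix (Fin n) (Fin n) ℂ) : 0 ≤ nradius A := by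
  obtain ⟨x, hx⟩ := exists_unit hn
  exact le_trans (norm_nonneg _) (le_nradius A hx)

lemma nradius_le_opnorm (hn : 1 ≤ n) (A : Matrix (Fin n) (Fin n) ℂ) :
    nradius A ≤ ‖Matrix.toEuclideanCLM (𝕜 := ℂ) A‖ := by
  obtain ⟨x0, hx0⟩ := exists_unit hn
  refine csSup_le ⟨_, ⟨x0, hx0, rfl⟩⟩ ?_
  rintro r ⟨x, hx, rfl⟩
  calc ‖(inner ℂ x (Matrix.toEuclideanCLM (𝕜 := ℂ) A x) : ℂ)‖
      ≤ ‖x‖ * ‖Matrix.toEuclideanCLM (𝕜 := ℂ) A x‖ := norm_inner_le_norm _ _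
    _ ≤ ‖x‖ * (‖Matrix.toEuclideanCLM (𝕜 := ℂ) A‖ * ‖x‖) := by
        gcongr
        exact ContinuousLinearMap.le_opNorm _ _
    _ = ‖Matrix.toEuclideanCLM (𝕜 := ℂ) A‖ := by rw [hx]; ring

lemma norm_inner_le_nradius_sq (A : Matrix (Fin n) (Fin n) ℂ) (x : EuclideanSpace ℂ (Fin n)) :
    ‖(inner ℂ x (Matrix.toEuclideanCLM (𝕜 := ℂ) A x) : ℂ)‖ ≤ nradius A * ‖x‖ ^ 2 := by
  by_cases hx : x = 0
  · simp [hx]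
  have hxn : (0:ℝ) < ‖x‖ := norm_pos_iff.mpr hx
  set u : EuclideanSpace ℂ (Fin n) := (‖x‖⁻¹ : ℝ) • x with hu
  have hun : ‖u‖ = 1 := by
    rw [hu, norm_smul]
    simp [abs_of_pos (inv_pos.mpr hxn), inv_mul_cancel₀ hxn.ne']
  have hxu : x = (‖x‖ : ℝ) • u := by
    rw [hu, smul_smul]
    simp [mul_inv_cancel₀ hxn.ne']
  have h2 : (inner ℂ x (Matrix.toEuclideanCLM (𝕜 := ℂ) A x) : ℂ)
      = (‖x‖ ^ 2 : ℝ) • (inner ℂ u (Matrix.toEuclideanCLM (𝕜 := ℂ) A u) : ℂ) := by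
    conv_lhs => rw [hxu]
    exact inner_real_smul_map _ u ‖x‖
  rw [h2, norm_smul]
  have := le_nradius A hun
  have h3 : ‖(‖x‖ ^ 2 : ℝ)‖ = ‖x‖ ^ 2 := by
    rw [Real.norm_eq_abs, abs_of_nonneg (sq_nonneg _)]
  rw [h3]
  nlinarith [norm_nonneg (inner ℂ u (Matrix.toEuclideanCLM (𝕜 := ℂ) A u) : ℂ)]

end NR

section Sector
open ContinuousLinearMap
open scoped MatrixOrder
set_option maxHeartbeats 2000000 in

lemma sector_bound {n : ℕ} (hn : 1 ≤ n) {α : ℝ} (hα0 : 0 ≤ α) (hα : α < Real.pi / 2)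
    {A : Matrix (Fin n) (Fin n) ℂ} (hR : ((1 / 2 : ℂ) • (A + Aᴴ)).PosDef)
    (hsec0 : ∀ x : EuclideanSpace ℂ (Fin n), ‖x‖ = 1 →
      |(inner ℂ x (Matrix.toEuclideanCLM (𝕜 := ℂ) A x) : ℂ).im| ≤
        Real.tan α * ((inner ℂ x (Matrix.toEuclideanCLM (𝕜 := ℂ) A x) : ℂ)).re) :
    Real.cos α * ‖Matrix.toEuclideanCLM (𝕜 := ℂ) A‖ ≤ nradius A := by
  have hcos : 0 < Real.cos α := Real.cos_pos_of_mem_Ioo ⟨by linarith [Real.pi_pos], hα⟩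
  have htan : 0 ≤ Real.tan α := by
    rw [Real.tan_eq_sin_div_cos]
    exact div_nonneg (Real.sin_nonneg_of_nonneg_of_le_pi hα0 (by linarith [Real.pi_pos])) hcos.le
  set R : Matrix (Fin n) (Fin n) ℂ := (1 / 2 : ℂ) • (A + Aᴴ) with hRdef
  -- scaled sector condition
  have hsec : ∀ x : EuclideanSpace ℂ (Fin n),
      |(inner ℂ x (Matrix.toEuclideanCLM (𝕜 := ℂ) A x) : ℂ).im| ≤
        Real.tan α * ((inner ℂ x (Matrix.toEuclideanCLM (𝕜 := ℂ) A x) : ℂ)).re := by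
    intro x
    by_cases hx : x = 0
    · simp [hx]
    have hxn : (0:ℝ) < ‖x‖ := norm_pos_iff.mpr hx
    set u : EuclideanSpace ℂ (Fin n) := (‖x‖⁻¹ : ℝ) • x with hu
    have hun : ‖u‖ = 1 := by
      rw [hu, norm_smul]
      simp [abs_of_pos (inv_pos.mpr hxn), inv_mul_cancel₀ hxn.ne']
    have h := hsec0 u hun
    rw [hu, inner_real_smul_map] at h
    have hr2 : (0:ℝ) < ‖x‖⁻¹ ^ 2 := by positivity
    rw [Complex.smul_im, Complex.smul_re, smul_eq_mul, smul_eq_mul, abs_mul,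
      abs_of_pos hr2] at h
    have h' : ‖x‖⁻¹ ^ 2 * |(inner ℂ x (Matrix.toEuclideanCLM (𝕜 := ℂ) A x) : ℂ).im| ≤
        ‖x‖⁻¹ ^ 2 * (Real.tan α * ((inner ℂ x (Matrix.toEuclideanCLM (𝕜 := ℂ) A x) : ℂ)).re) := by
      linarith [h]
    exact le_of_mul_le_mul_left h' hr2
  have hRps : R.PosSemidef := hR.posSemidef
  set P : Matrix (Fin n) (Fin n) ℂ := CFC.sqrt R with hPdef
  have hPps : P.PosSemidef := (CFC.sqrt_nonneg R).posSemidef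
  have hPP : P * P = R := CFC.sqrt_mul_sqrt_self R hRps.nonneg
  have hPH : P.IsHermitian := hPps.1
  have hPdet : IsUnit P.det := by
    have h1 : P.det * P.det = R.det := by rw [← Matrix.det_mul, hPP]
    have h2 : IsUnit R.det := hR.det_pos.ne'.isUnit
    rw [← h1] at h2
    exact isUnit_of_mul_isUnit_left h2
  have hPinv : P⁻¹ * P = 1 := Matrix.nonsing_inv_mul P hPdet
  have hPinv' : P * P⁻¹ = 1 := Matrix.mul_nonsing_inv P hPdet
  set S : Matrix (Fin n) (Fin n) ℂ := ((2 : ℂ) * Complex.I)⁻¹ • (A - Aᴴ) with hSdef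
  have hARS : A = R + Complex.I • S := by
    rw [hSdef, hRdef, smul_smul]
    have hc : Complex.I * ((2 : ℂ) * Complex.I)⁻¹ = 1 / 2 := by
      field_simp
    rw [hc]
    module
  have hSH : S.IsHermitian := by
    have hc : star (((2:ℂ) * Complex.I)⁻¹) = -((2:ℂ) * Complex.I)⁻¹ := by
      simp [Complex.ext_iff]
    rw [Matrix.IsHermitian, hSdef, Matrix.conjTranspose_smul, Matrix.conjTranspose_sub,
      Matrix.conjTranspose_conjTranspose, hc]
    module
  set K : Matrix (Fin n) (Fin n) ℂ := P⁻¹ * S * P⁻¹ with hKdef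
  have hPinvH : (P⁻¹).IsHermitian := hPH.inv
  have hKH : K.IsHermitian := by
    rw [Matrix.IsHermitian, hKdef, Matrix.conjTranspose_mul, Matrix.conjTranspose_mul,
      hPinvH.eq, hSH.eq, Matrix.mul_assoc]
  have hfact : P * (1 + Complex.I • K) * P = A := by
    rw [hKdef]
    simp only [Matrix.mul_add, Matrix.add_mul, Matrix.mul_one, Matrix.one_mul,
      Matrix.mul_smul, Matrix.smul_mul, Matrix.mul_assoc]
    rw [hPinv, Matrix.mul_one, ← Matrix.mul_assoc P P⁻¹ S, hPinv', Matrix.one_mul, hPP, ← hARS]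
  -- move to CLM land
  set f := Matrix.toEuclideanCLM (𝕜 := ℂ) (n := Fin n) with hfdef
  set T := f A with hT
  set P' := f P with hP'
  set K' := f K with hK'
  have hP'sa : _root_.IsSelfAdjoint P' := by
    have h0 : star (f P) = f (star P) := (map_star f P).symm
    rw [Matrix.star_eq_conjTranspose, hPH.eq] at h0
    exact h0
  have hK'sa : _root_.IsSelfAdjoint K' := by
    have h0 : star (f K) = f (star K) := (map_star f K).symm
    rw [Matrix.star_eq_conjTranspose, hKH.eq] at h0
    exact h0
  have hQsa : _root_.IsSelfAdjoint (f P⁻¹) := by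
    have h0 : star (f P⁻¹) = f (star P⁻¹) := (map_star f P⁻¹).symm
    rw [Matrix.star_eq_conjTranspose, hPinvH.eq] at h0
    exact h0
  have hTfact : T = P' * (1 + Complex.I • K') * P' := by
    rw [hT, ← hfact]
    simp only [_root_.map_mul, _root_.map_add, _root_.map_one, _root_.map_smul]
    rfl
  -- norm of K'
  have hK'norm : ‖K'‖ ≤ Real.tan α := by
    refine selfadj_norm_le hK'sa htan fun y => ?_
    set x : EuclideanSpace ℂ (Fin n) := f P⁻¹ y with hxdef
    have hK'app : K' y = f P⁻¹ (f S x) := by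
      rw [hK', hKdef, _root_.map_mul, _root_.map_mul]
      rfl
    have hPx : P' x = y := by
      have h1 : P' x = (f P * f P⁻¹) y := rfl
      rw [h1, ← _root_.map_mul, hPinv', _root_.map_one, ContinuousLinearMap.one_apply]
    have h1 : (inner ℂ y (K' y) : ℂ) = inner ℂ x (f S x) := by
      rw [hK'app, ← inner_selfadj_symm hQsa y (f S x)]
    set z : ℂ := inner ℂ x (T x) with hz
    have hS' : (inner ℂ x (f S x) : ℂ) = (z.im : ℂ) := by
      have hfS : f S = ((2 : ℂ) * Complex.I)⁻¹ • (T - ContinuousLinearMap.adjoint T) := by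
        rw [hSdef, _root_.map_smul, map_sub, hT, ← Matrix.star_eq_conjTranspose, map_star,
          star_eq_adjoint]
      rw [hfS]
      simp only [ContinuousLinearMap.smul_apply, ContinuousLinearMap.sub_apply,
        inner_smul_right, inner_sub_right]
      rw [adjoint_inner_right]
      have hconj : (inner ℂ (T x) x : ℂ) = starRingEnd ℂ z := by
        rw [hz, ← inner_conj_symm]
      rw [hconj, ← hz, Complex.sub_conj]
      have : ((2:ℂ) * Complex.I) ≠ 0 := by simp [Complex.I_ne_zero]
      field_simp
      push_cast
      ring
    have hre : z.re = ‖y‖ ^ 2 := by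
      have hfr : (inner ℂ x (f R x) : ℂ) = ((z.re : ℝ) : ℂ) := by
        have hRf : f R = (1 / 2 : ℂ) • (T + ContinuousLinearMap.adjoint T) := by
          rw [hRdef, _root_.map_smul, map_add, hT, ← Matrix.star_eq_conjTranspose, map_star,
            star_eq_adjoint]
        rw [hRf]
        simp only [ContinuousLinearMap.smul_apply, ContinuousLinearMap.add_apply,
          inner_smul_right, inner_add_right]
        rw [adjoint_inner_right]
        have hconj : (inner ℂ (T x) x : ℂ) = starRingEnd ℂ z := by
          rw [hz, ← inner_conj_symm]
        rw [hconj, ← hz, Complex.add_conj]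
        push_cast
        ring
      have hfr2 : (inner ℂ x (f R x) : ℂ) = ((‖y‖ ^ 2 : ℝ) : ℂ) := by
        have hRPP : f R = P' * P' := by rw [← hPP, _root_.map_mul]
        rw [hRPP]
        have happ : (P' * P') x = P' (P' x) := rfl
        rw [happ, ← inner_selfadj_symm hP'sa x (P' x), hPx, inner_self_eq_norm_sq_to_K]
        norm_num
      have := hfr.symm.trans hfr2
      exact_mod_cast this
    have habs : |(inner ℂ y (K' y) : ℂ).re| = |z.im| := by
      rw [h1, hS']
      simp
    rw [habs]
    calc |z.im| ≤ Real.tan α * z.re := hsec x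
      _ = Real.tan α * ‖y‖ ^ 2 := by rw [hre]
  -- norms
  have honeK : ‖(1 : EuclideanSpace ℂ (Fin n) →L[ℂ] EuclideanSpace ℂ (Fin n))
      + Complex.I • K'‖ ≤ Real.sqrt (1 + Real.tan α ^ 2) :=
    norm_one_add_I_smul hK'sa htan hK'norm
  have hsqrt : Real.sqrt (1 + Real.tan α ^ 2) = (Real.cos α)⁻¹ := by
    have h := Real.inv_sqrt_one_add_tan_sq hcos
    rw [← h, inv_inv]
  have hPnorm : ‖P'‖ * ‖P'‖ = ‖f R‖ := by
    have h1 := CStarRing.norm_star_mul_self (x := P')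
    rw [hP'sa.star_eq] at h1
    rw [← h1, ← _root_.map_mul, ← hPP]
  have hRsa : _root_.IsSelfAdjoint (f R) := by
    have h0 : star (f R) = f (star R) := (map_star f R).symm
    rw [Matrix.star_eq_conjTranspose, hR.isHermitian.eq] at h0
    exact h0
  have hRnorm : ‖f R‖ ≤ nradius A := by
    refine selfadj_norm_le hRsa (nradius_nonneg hn A) fun x => ?_
    set z : ℂ := inner ℂ x (T x) with hz
    have hfr : (inner ℂ x (f R x) : ℂ) = ((z.re : ℝ) : ℂ) := by
      have hRf : f R = (1 / 2 : ℂ) • (T + ContinuousLinearMap.adjoint T) := by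
        rw [hRdef, _root_.map_smul, map_add, hT, ← Matrix.star_eq_conjTranspose, map_star,
          star_eq_adjoint]
      rw [hRf]
      simp only [ContinuousLinearMap.smul_apply, ContinuousLinearMap.add_apply,
        inner_smul_right, inner_add_right]
      rw [adjoint_inner_right]
      have hconj : (inner ℂ (T x) x : ℂ) = starRingEnd ℂ z := by
        rw [hz, ← inner_conj_symm]
      rw [hconj, ← hz, Complex.add_conj]
      push_cast
      ring
    have h2 : |(inner ℂ x (f R x) : ℂ).re| = |z.re| := by rw [hfr]; simp
    rw [h2]
    calc |z.re| ≤ ‖z‖ := by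
          rw [hz]
          exact Complex.abs_re_le_norm _
      _ ≤ nradius A * ‖x‖ ^ 2 := norm_inner_le_nradius_sq A x
  -- combine
  have hTnorm : ‖T‖ ≤ ‖P'‖ * ‖(1 : EuclideanSpace ℂ (Fin n) →L[ℂ] EuclideanSpace ℂ (Fin n))
      + Complex.I • K'‖ * ‖P'‖ := by
    rw [hTfact]
    calc ‖P' * (1 + Complex.I • K') * P'‖ ≤ ‖P' * (1 + Complex.I • K')‖ * ‖P'‖ :=
        norm_mul_le _ _
      _ ≤ ‖P'‖ * ‖(1 + Complex.I • K')‖ * ‖P'‖ := by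
          gcongr
          exact norm_mul_le _ _
  have hP'nn : (0:ℝ) ≤ ‖P'‖ := norm_nonneg _
  calc Real.cos α * ‖f A‖ = Real.cos α * ‖T‖ := by rw [hT]
    _ ≤ Real.cos α * (‖P'‖ * (Real.cos α)⁻¹ * ‖P'‖) := by
        have h3 : ‖T‖ ≤ ‖P'‖ * (Real.cos α)⁻¹ * ‖P'‖ := by
          refine le_trans hTnorm ?_
          gcongr
          rw [← hsqrt]
          exact honeK
        exact mul_le_mul_of_nonneg_left h3 hcos.le
    _ = ‖P'‖ * ‖P'‖ := by
        have h4 : Real.cos α * (‖P'‖ * (Real.cos α)⁻¹ * ‖P'‖)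
            = (Real.cos α * (Real.cos α)⁻¹) * (‖P'‖ * ‖P'‖) := by ring
        rw [h4, mul_inv_cancel₀ hcos.ne', one_mul]
    _ = ‖f R‖ := hPnorm
    _ ≤ nradius A := hRnorm

end Sector

set_option maxHeartbeats 1000000 in
theorem stmt19 {n : ℕ} (hn : 1 ≤ n) {α : ℝ} (hα0 : 0 ≤ α) (hα : α < Real.pi / 2)
    {A B : Matrix (Fin n) (Fin n) ℂ} (hA : InSector α A) (hB : InSector α B)
    {t : ℝ} (ht : t ∈ Set.Ioo (0 : ℝ) 1) :
    Real.cos α * nradius (A * B) ^ ((1 : ℝ) / 2) ≤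
      heinzScal (nradius A) (nradius B) t := by
  obtain ⟨ht0, ht1⟩ := ht
  have hcos : 0 < Real.cos α := Real.cos_pos_of_mem_Ioo ⟨by linarith [Real.pi_pos], hα⟩
  have hA' : Real.cos α * ‖Matrix.toEuclideanCLM (𝕜 := ℂ) A‖ ≤ nradius A :=
    sector_bound hn hα0 hα hA.1 hA.2
  have hB' : Real.cos α * ‖Matrix.toEuclideanCLM (𝕜 := ℂ) B‖ ≤ nradius B :=
    sector_bound hn hα0 hα hB.1 hB.2
  have ha0 : 0 ≤ nradius A := nradius_nonneg hn A
  have hb0 : 0 ≤ nradius B := nradius_nonneg hn B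
  have hw0 : 0 ≤ nradius (A * B) := nradius_nonneg hn _
  have hAB : nradius (A * B) ≤
      ‖Matrix.toEuclideanCLM (𝕜 := ℂ) A‖ * ‖Matrix.toEuclideanCLM (𝕜 := ℂ) B‖ := by
    refine le_trans (nradius_le_opnorm hn _) ?_
    rw [_root_.map_mul]
    exact norm_mul_le _ _
  have key : Real.cos α ^ 2 * nradius (A * B) ≤ nradius A * nradius B := by
    have p1 : (Real.cos α * ‖Matrix.toEuclideanCLM (𝕜 := ℂ) A‖)
        * (Real.cos α * ‖Matrix.toEuclideanCLM (𝕜 := ℂ) B‖) ≤ nradius A * nradius B :=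
      mul_le_mul hA' hB' (by positivity) ha0
    have p2 := mul_le_mul_of_nonneg_left hAB (sq_nonneg (Real.cos α))
    nlinarith [p1, p2]
  have hL : Real.cos α * nradius (A * B) ^ ((1:ℝ)/2)
      = (Real.cos α ^ 2 * nradius (A * B)) ^ ((1:ℝ)/2) := by
    rw [Real.mul_rpow (by positivity) hw0]
    congr 1
    rw [← Real.rpow_natCast (Real.cos α) 2, ← Real.rpow_mul hcos.le]
    norm_num
  have hmid : (Real.cos α ^ 2 * nradius (A * B)) ^ ((1:ℝ)/2)
      ≤ (nradius A * nradius B) ^ ((1:ℝ)/2) :=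
    Real.rpow_le_rpow (by positivity) key (by norm_num)
  rw [hL]
  refine le_trans hmid ?_
  set a := nradius A with hadef
  set b := nradius B with hbdef
  unfold heinzScal
  have h1t : (0:ℝ) < 1 - t := by linarith
  rcases eq_or_lt_of_le ha0 with ha | ha
  · rw [← ha, zero_mul, Real.zero_rpow (by norm_num : (1:ℝ)/2 ≠ 0),
      Real.zero_rpow h1t.ne', Real.zero_rpow ht0.ne', zero_mul, zero_mul]
    norm_num
  rcases eq_or_lt_of_le hb0 with hb | hb
  · rw [← hb, mul_zero, Real.zero_rpow (by norm_num : (1:ℝ)/2 ≠ 0),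
      Real.zero_rpow h1t.ne', Real.zero_rpow ht0.ne', mul_zero, mul_zero]
    norm_num
  have hab : (a ^ (1-t) * b ^ t) * (a ^ t * b ^ (1-t)) = a * b := by
    rw [show (a ^ (1-t) * b ^ t) * (a ^ t * b ^ (1-t))
        = (a ^ (1-t) * a ^ t) * (b ^ t * b ^ (1-t)) by ring,
      ← Real.rpow_add ha, ← Real.rpow_add hb]
    norm_num
  have hg : (a * b) ^ ((1:ℝ)/2) = Real.sqrt ((a ^ (1-t) * b ^ t) * (a ^ t * b ^ (1-t))) := by
    rw [hab, Real.sqrt_eq_rpow]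
  rw [hg]
  set u := a ^ (1-t) * b ^ t with hudef
  set v := a ^ t * b ^ (1-t) with hvdef
  have hu : 0 < u := by rw [hudef]; positivity
  have hv : 0 < v := by rw [hvdef]; positivity
  have h2 : u * v ≤ ((u+v)/2)^2 := by nlinarith [sq_nonneg (u-v)]
  have h3 := Real.sqrt_le_sqrt h2
  rwa [Real.sqrt_sq (by positivity)] at h3
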